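/- arXiv:0810.1697 — 3 statements merged into one kernel-verified Lean document; each statement's English description precedes it below -/
import Mathlib

section
/- With e_n defined by e_0 = 1, e_1 = z, e_{n+1} = z·e_n - e_{n-1}, for all nonnegative integers m, n one has e_m · e_n = Σ_{l} e_l, where the sum runs over all nonnegative integers l such that the triple (l, m, n) is admissible, i.e., l + m + n is even and |m - n| ≤ l ≤ m + n. -/
theorem cable_e_product (e : ℕ → Polynomial ℤ)
    (h0 : e 0 = 1) (h1 : e 1 = Polynomial.X)
    (hrec : ∀ n : ℕ, 1 ≤ n → e (n + 1) = Polynomial.X * e n - e (n - 1)) :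
    ∀ m n : ℕ, e m * e n =
      ∑ l ∈ (Finset.range (m + n + 1)).filter
        (fun l => Even (l + m + n) ∧ m ≤ n + l ∧ n ≤ m + l ∧ l ≤ m + n), e l := by
  have hX : ∀ n : ℕ, 1 ≤ n → Polynomial.X * e n = e (n + 1) + e (n - 1) := by
    intro n hn
    rw [hrec n hn]; ring
  have key : ∀ m n : ℕ, m ≤ n →
      e m * e n = ∑ k ∈ Finset.range (m + 1), e (n - m + 2 * k) := by
    intro m
    induction m using Nat.strong_induction_on with
    | _ m ih =>
      match m with
      | 0 => intro n _; simp [h0]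
      | 1 =>
        intro n hn
        rw [h1, hX n hn, Finset.sum_range_succ, Finset.sum_range_one]
        have h2 : n - 1 + 2 * 1 = n + 1 := by omega
        have h3 : n - 1 + 2 * 0 = n - 1 := by omega
        rw [h2, h3, add_comm]
      | (m + 2) =>
        intro n hn
        set f : ℕ → Polynomial ℤ := fun k => e (n - (m + 2) + 2 * k) with hf
        have hA : e (m + 1) * e n = ∑ k ∈ Finset.range (m + 2), e (n - (m + 1) + 2 * k) :=
          ih (m + 1) (by omega) n (by omega)
        have hB : e m * e n = ∑ k ∈ Finset.range (m + 1), e (n - m + 2 * k) :=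
          ih m (by omega) n (by omega)
        have hstep : e (m + 2) * e n =
            Polynomial.X * (e (m + 1) * e n) - e m * e n := by
          have hr : e (m + 2) = Polynomial.X * e (m + 1) - e m := by
            simpa using hrec (m + 1) (by omega)
          rw [hr]; ring
        rw [hstep, hA, hB, Finset.mul_sum]
        have hXs : ∀ k ∈ Finset.range (m + 2),
            Polynomial.X * e (n - (m + 1) + 2 * k) = f (k + 1) + f k := by
          intro k hk
          have h1le : 1 ≤ n - (m + 1) + 2 * k := by omega
          rw [hX _ h1le, hf]
          have e1 : n - (m + 1) + 2 * k + 1 = n - (m + 2) + 2 * (k + 1) := by omega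
          have e2 : n - (m + 1) + 2 * k - 1 = n - (m + 2) + 2 * k := by omega
          rw [e1, e2]
        rw [Finset.sum_congr rfl hXs, Finset.sum_add_distrib]
        have hs1 : ∑ k ∈ Finset.range (m + 3), f k
            = (∑ k ∈ Finset.range (m + 2), f (k + 1)) + f 0 :=
          Finset.sum_range_succ' f (m + 2)
        have hs2 : ∑ k ∈ Finset.range (m + 2), f k
            = (∑ k ∈ Finset.range (m + 1), f (k + 1)) + f 0 :=
          Finset.sum_range_succ' f (m + 1)
        have hB' : ∑ k ∈ Finset.range (m + 1), e (n - m + 2 * k)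
            = ∑ k ∈ Finset.range (m + 1), f (k + 1) := by
          refine Finset.sum_congr rfl fun k _ => ?_
          rw [hf]
          congr 1
          omega
        rw [hB']
        have : ∑ k ∈ Finset.range (m + 2), f (k + 1)
            = ∑ k ∈ Finset.range (m + 3), f k - f 0 := by
          rw [hs1]; ring
        rw [this, hs2]
        ring
  intro m n
  have main : ∀ m n : ℕ, m ≤ n →
      (∑ l ∈ (Finset.range (m + n + 1)).filter
        (fun l => Even (l + m + n) ∧ m ≤ n + l ∧ n ≤ m + l ∧ l ≤ m + n), e l)
      = ∑ k ∈ Finset.range (m + 1), e (n - m + 2 * k) := by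
    intro m n hmn
    rw [show (Finset.range (m + n + 1)).filter
        (fun l => Even (l + m + n) ∧ m ≤ n + l ∧ n ≤ m + l ∧ l ≤ m + n)
        = (Finset.range (m + 1)).image (fun k => n - m + 2 * k) from ?_]
    · exact Finset.sum_image (by intro a _ b _ h; simp only at h; omega)
    · ext l
      simp only [Finset.mem_filter, Finset.mem_image, Finset.mem_range, Nat.even_iff]
      constructor
      · rintro ⟨hl, hev, h1, h2, h3⟩
        exact ⟨(l - (n - m)) / 2, by omega, by omega⟩
      · rintro ⟨k, hk, rfl⟩
        refine ⟨by omega, by omega, by omega, by omega, by omega⟩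
  rcases le_total m n with h | h
  · rw [key m n h, main m n h]
  · have hsets : (Finset.range (m + n + 1)).filter
        (fun l => Even (l + m + n) ∧ m ≤ n + l ∧ n ≤ m + l ∧ l ≤ m + n)
        = (Finset.range (n + m + 1)).filter
        (fun l => Even (l + n + m) ∧ n ≤ m + l ∧ m ≤ n + l ∧ l ≤ n + m) := by
      ext l
      simp only [Finset.mem_filter, Finset.mem_range, Nat.even_iff]
      omega
    rw [mul_comm, key n m h, hsets, main n m h]
end

section
/- Let N be a nonnegative integer and α₁, α₂, α₃, ζ ∈ ℂ. Then Σ_{k=-N, k ≡ N (mod 2)}^{N} exp(α₁k² + α₂k)·sinh(α₃k + ζ) = Σ_{k=-N, k ≡ N (mod 2)}^{N} exp(α₁k² + α₃k)·sinh(α₂k + ζ). In other words, the roles of α₂ and α₃ may be exchanged. -/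
theorem exchange_sinh (N : ℕ) (α₁ α₂ α₃ ζ : ℂ) :
    ∑ k ∈ (Finset.Icc (-(N : ℤ)) N).filter (fun k => Even (k + (N : ℤ))),
        Complex.exp (α₁ * k ^ 2 + α₂ * k) * Complex.sinh (α₃ * k + ζ) =
      ∑ k ∈ (Finset.Icc (-(N : ℤ)) N).filter (fun k => Even (k + (N : ℤ))),
        Complex.exp (α₁ * k ^ 2 + α₃ * k) * Complex.sinh (α₂ * k + ζ) := by
  set S := (Finset.Icc (-(N : ℤ)) N).filter (fun k => Even (k + (N : ℤ))) with hS
  have hmem : ∀ k : ℤ, k ∈ S → -k ∈ S := by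
    intro k hk
    simp only [hS, Finset.mem_filter, Finset.mem_Icc] at hk ⊢
    refine ⟨⟨by omega, by omega⟩, ?_⟩
    rcases hk.2 with ⟨m, hm⟩
    exact ⟨N - m, by omega⟩
  have key : ∀ β : ℂ,
      ∑ k ∈ S, Complex.exp (α₁ * k ^ 2 + β * k - ζ)
        = ∑ k ∈ S, Complex.exp (α₁ * k ^ 2 + (-β) * k - ζ) := by
    intro β
    refine Finset.sum_nbij' (fun k => -k) (fun k => -k) (fun k hk => hmem k hk)
      (fun k hk => hmem k hk) (fun k _ => by ring) (fun k _ => by ring) ?_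
    intro k _
    push_cast
    ring_nf
  have sinh_eq : ∀ x : ℂ, Complex.sinh x = (Complex.exp x - Complex.exp (-x)) / 2 := by
    intro x
    rfl
  have expand : ∀ β γ : ℂ,
      ∑ k ∈ S, Complex.exp (α₁ * k ^ 2 + β * k) * Complex.sinh (γ * k + ζ)
        = ((∑ k ∈ S, Complex.exp (α₁ * k ^ 2 + (β + γ) * k + ζ))
            - ∑ k ∈ S, Complex.exp (α₁ * k ^ 2 + (β - γ) * k - ζ)) / 2 := by
    intro β γ
    rw [← Finset.sum_sub_distrib, Finset.sum_div]
    refine Finset.sum_congr rfl fun k _ => ?_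
    rw [sinh_eq, ← mul_div_assoc, mul_sub, ← Complex.exp_add, ← Complex.exp_add]
    ring_nf
  rw [expand α₂ α₃, expand α₃ α₂, key (α₂ - α₃)]
  congr 2
  · exact Finset.sum_congr rfl fun k _ => by ring_nf
  · exact Finset.sum_congr rfl fun k _ => by ring_nf
end

section
/- At A = exp(πi/(2(r+1))) with [m] = sin(mπ/(r+1))/sin(π/(r+1)): for integers m with 0 < m < r, Σ_{t=0}^{r-1} (-1)^t·[t+1]·(-1)^{m+t}·[(m+1)(t+1)] = 0, i.e. the Hopf link pairing ⟨e_m, ω_r⟩_H vanishes for 0 < m < r; and for m = 0 the sum equals Σ_{t=0}^{r-1} [t+1]². -/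
open Complex

lemma hopf_point (z : ℂ) (hz : z ≠ 0) (s m : ℕ) :
    ((z^s)⁻¹ - z^s) * I * (((z^((m+1)*s))⁻¹ - z^((m+1)*s)) * I) / 4
    = -(((z^(m+2))^s + ((z^(m+2))^s)⁻¹))/4 + ((z^m)^s + ((z^m)^s)⁻¹)/4 := by
  rw [← pow_mul, ← pow_mul]
  field_simp
  ring_nf
  rw [Complex.I_sq]
  ring_nf

lemma hopf_exp_ne_one (r k : ℕ) (hk : 0 < k) (hk2 : k < 2*(r+1)) :
    Complex.exp ((k : ℂ) * (Real.pi * I / (r+1))) ≠ 1 := by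
  intro hcon
  rw [Complex.exp_eq_one_iff] at hcon
  obtain ⟨n, hn⟩ := hcon
  have hr1 : ((r:ℂ)+1) ≠ 0 := by norm_cast
  have hpi : (Real.pi : ℂ) ≠ 0 := by exact_mod_cast Real.pi_ne_zero
  have hI : (I:ℂ) ≠ 0 := Complex.I_ne_zero
  have h2 : (k : ℂ) = n * (2*(r+1)) := by
    field_simp at hn
    apply mul_right_cancel₀ (mul_ne_zero hpi hI)
    linear_combination ((Real.pi : ℂ) * I) * hn
  have h3 : (k : ℤ) = n * (2*(r+1)) := by exact_mod_cast h2
  have hk' : (0:ℤ) < k := by exact_mod_cast hk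
  have hk2' : (k:ℤ) < 2*(r+1) := by exact_mod_cast hk2
  rcases lt_trichotomy n 0 with h|h|h
  · nlinarith [h3]
  · simp [h] at h3; omega
  · nlinarith [h3]

lemma hopf_S_eq (r k : ℕ) (hk : 0 < k) (hk2 : k < 2*(r+1)) :
    ∑ t ∈ Finset.range r,
      ((Complex.exp (Real.pi * I / (r+1)) ^ k) ^ (t+1)
        + ((Complex.exp (Real.pi * I / (r+1)) ^ k) ^ (t+1))⁻¹)
    = -1 - (-1:ℂ)^k := by
  set z := Complex.exp (Real.pi * I / (r+1)) with hzdef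
  have hzne : z ≠ 0 := Complex.exp_ne_zero _
  have hexp : z ^ k = Complex.exp ((k:ℂ) * (Real.pi * I / (r+1))) := by
    rw [hzdef, ← Complex.exp_nat_mul]
  have hune : z ^ k ≠ 1 := by rw [hexp]; exact hopf_exp_ne_one r k hk hk2
  have hu0 : z ^ k ≠ 0 := pow_ne_zero _ hzne
  have hzr : z ^ (r+1) = -1 := by
    rw [hzdef, ← Complex.exp_nat_mul]
    have : ((r:ℂ)+1) ≠ 0 := by norm_cast
    rw [show ((r+1 : ℕ):ℂ) * (Real.pi * I / (r+1)) = Real.pi * I by push_cast; field_simp]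
    exact Complex.exp_pi_mul_I
  have hur : (z ^ k) ^ (r+1) = (-1:ℂ)^k := by
    rw [← pow_mul, mul_comm, pow_mul, hzr]
  set u := z ^ k with hudef
  have huinv_ne : u⁻¹ ≠ 1 := by simp only [ne_eq, inv_eq_one]; exact hune
  have h1 : ∑ t ∈ Finset.range r, u^(t+1) = (u^(r+1) - 1)/(u-1) - 1 := by
    have hg := geom_sum_eq hune (r+1)
    rw [Finset.sum_range_succ'] at hg
    simp only [pow_zero] at hg
    linear_combination hg
  have h2 : ∑ t ∈ Finset.range r, (u^(t+1))⁻¹ = ((u^(r+1))⁻¹ - 1)/(u⁻¹-1) - 1 := by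
    have hg := geom_sum_eq huinv_ne (r+1)
    rw [Finset.sum_range_succ'] at hg
    simp only [pow_zero, inv_pow] at hg
    linear_combination hg
  rw [Finset.sum_add_distrib, h1, h2, hur]
  have hinv : ((-1:ℂ)^k)⁻¹ = (-1:ℂ)^k := by
    rw [← inv_pow]; norm_num
  rw [hinv]
  have hn1 : u - 1 ≠ 0 := sub_ne_zero.mpr hune
  have hn2 : u⁻¹ - 1 ≠ 0 := sub_ne_zero.mpr huinv_ne
  have hn3 : 1 - u ≠ 0 := sub_ne_zero.mpr fun h => hune h.symm
  field_simp [hn1, hn3]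
  ring

lemma hopf_sin_sum (r m : ℕ) (hm : 0 < m) (hmr : m < r) :
    ∑ t ∈ Finset.range r, Complex.sin (((t:ℂ)+1) * Real.pi / (r+1)) *
      Complex.sin (((m:ℂ)+1) * (((t:ℂ)+1) * Real.pi / (r+1))) = 0 := by
  set z := Complex.exp (Real.pi * I / (r+1)) with hzdef
  have hzne : z ≠ 0 := Complex.exp_ne_zero _
  have hpoint : ∀ t ∈ Finset.range r,
      Complex.sin (((t:ℂ)+1) * Real.pi / (r+1)) *
        Complex.sin (((m:ℂ)+1) * (((t:ℂ)+1) * Real.pi / (r+1)))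
      = -(((z^(m+2))^(t+1) + ((z^(m+2))^(t+1))⁻¹))/4
        + ((z^m)^(t+1) + ((z^m)^(t+1))⁻¹)/4 := by
    intro t _
    set a : ℂ := ((t:ℂ)+1) * Real.pi / (r+1) with ha
    set b : ℂ := ((m:ℂ)+1) * (((t:ℂ)+1) * Real.pi / (r+1)) with hb
    have e1 : Complex.exp (a * I) = z^(t+1) := by
      rw [hzdef, ← Complex.exp_nat_mul]
      congr 1
      push_cast [ha]
      ring
    have e2 : Complex.exp (b * I) = z^((m+1)*(t+1)) := by
      rw [hzdef, ← Complex.exp_nat_mul]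
      congr 1
      push_cast [hb]
      ring
    have s1 : Complex.sin a = ((z^(t+1))⁻¹ - z^(t+1)) * I / 2 := by
      have h := Complex.two_sin a
      rw [neg_mul, Complex.exp_neg, e1] at h
      linear_combination h / 2
    have s2 : Complex.sin b = ((z^((m+1)*(t+1)))⁻¹ - z^((m+1)*(t+1))) * I / 2 := by
      have h := Complex.two_sin b
      rw [neg_mul, Complex.exp_neg, e2] at h
      linear_combination h / 2
    rw [s1, s2]
    linear_combination hopf_point z hzne (t+1) m
  rw [Finset.sum_congr rfl hpoint, Finset.sum_add_distrib]
  have hA := hopf_S_eq r (m+2) (by omega) (by omega)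
  have hB := hopf_S_eq r m hm (by omega)
  rw [← hzdef] at hA hB
  rw [show ∀ f : ℕ → ℂ, ∑ t ∈ Finset.range r, -(f t)/4 = -(∑ t ∈ Finset.range r, f t)/4 from
    fun f => by rw [← Finset.sum_div, ← Finset.sum_neg_distrib]]
  rw [← Finset.sum_div, hA, hB, pow_add]
  ring

theorem hopf_pairing_omega (r : ℕ) (hr : 1 ≤ r)
    (qi : ℤ → ℂ)
    (hqi : ∀ m : ℤ, qi m = Complex.sin (m * Real.pi / (r + 1)) /
        Complex.sin (Real.pi / (r + 1))) :
    ∀ m : ℕ,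
      (0 < m → m < r →
        ∑ t ∈ Finset.range r,
            (-1 : ℂ) ^ t * qi (t + 1) * (-1 : ℂ) ^ (m + t) *
              qi ((m + 1) * (t + 1)) = 0) ∧
      (m = 0 →
        ∑ t ∈ Finset.range r,
            (-1 : ℂ) ^ t * qi (t + 1) * (-1 : ℂ) ^ (m + t) *
              qi ((m + 1) * (t + 1)) =
          ∑ t ∈ Finset.range r, qi (t + 1) ^ 2) := by
  intro m
  constructor
  · intro hm hmr
    set s : ℂ := Complex.sin (Real.pi / (r + 1)) with hs
    have hterm : ∀ t ∈ Finset.range r,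
        (-1 : ℂ) ^ t * qi (t + 1) * (-1 : ℂ) ^ (m + t) * qi ((m + 1) * (t + 1))
        = (-1 : ℂ) ^ m * (Complex.sin (((t:ℂ)+1) * Real.pi / (r+1)) *
            Complex.sin (((m:ℂ)+1) * (((t:ℂ)+1) * Real.pi / (r+1)))) / s ^ 2 := by
      intro t _
      rw [hqi, hqi, pow_add]
      have h1 : ((-1:ℂ)^t) * ((-1:ℂ)^t) = 1 := by
        rw [← pow_add, ← two_mul, pow_mul]; norm_num
      push_cast
      rw [show ((m:ℂ)+1) * ((t:ℂ)+1) * Real.pi / (r+1)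
            = ((m:ℂ)+1) * (((t:ℂ)+1) * Real.pi / (r+1)) by ring]
      linear_combination ((-1:ℂ)^m * Complex.sin (((t:ℂ)+1) * Real.pi / (r+1)) *
        Complex.sin (((m:ℂ)+1) * (((t:ℂ)+1) * Real.pi / (r+1))) / s ^ 2) * h1
    rw [Finset.sum_congr rfl hterm, ← Finset.sum_div, ← Finset.mul_sum,
      hopf_sin_sum r m hm hmr, mul_zero, zero_div]
  · intro hm0
    subst hm0
    refine Finset.sum_congr rfl fun t _ => ?_
    have h1 : ((-1:ℂ)^t) * ((-1:ℂ)^t) = 1 := by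
      rw [← pow_add, ← two_mul, pow_mul]; norm_num
    norm_num
    linear_combination (qi ((t:ℤ) + 1))^2 * h1
end
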